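/- Assume α(1-ω) = β with β > γ, and fix c > 0. Then in the (V,S,D)-space the line σ_c = {(V, cV, mV) : V > 0} with m = βω/((β-γ)(1-ω)), i.e., the intersection of the planes S = cV and D = mV, is invariant under the flow: if a solution starts with S(0) = cV(0) and D(0) = mV(0) then S(t) = cV(t) and D(t) = mV(t) for all t where the solution exists (given V(t) > 0). -/

import Mathlib

lemma lin_zero (h u : ℝ → ℝ) (hcont : Continuous h)
    (hu : ∀ t, HasDerivAt u (h t * u t) t) (h0 : u 0 = 0) : ∀ t, u t = 0 := by
  set A : ℝ → ℝ := fun t => ∫ s in (0:ℝ)..t, h s with hA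
  have hAderiv : ∀ t, HasDerivAt A (h t) t := fun t =>
    (hcont.integral_hasStrictDerivAt 0 t).hasDerivAt
  set g : ℝ → ℝ := fun t => u t * Real.exp (-A t) with hg
  have hgd : ∀ t, HasDerivAt g 0 t := by
    intro t
    have h1 : HasDerivAt (fun t => Real.exp (-A t)) (Real.exp (-A t) * (-h t)) t :=
      ((hAderiv t).neg).exp
    have := (hu t).mul h1
    refine this.congr_deriv (Eq.symm ?_)
    ring
  have hconst : ∀ t, g t = g 0 := by
    intro t
    apply is_const_of_deriv_eq_zero (f := g)
    · exact fun x => (hgd x).differentiableAt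
    · exact fun x => (hgd x).deriv
  intro t
  have := hconst t
  simp only [hg, h0, zero_mul] at this
  exact (mul_eq_zero.mp this).resolve_right (Real.exp_ne_zero _)

theorem stmt13 (α β γ κ ε εp ω c : ℝ)
    (hα : 0 < α) (hβ : 0 < β) (hγ : 0 < γ) (hκ : 0 < κ) (hε : 0 < ε) (hεp : 0 < εp)
    (hω0 : 0 < ω) (hω1 : ω < 1) (hαβ : α * (1 - ω) = β) (hβγ : γ < β) (hc : 0 < c)
    (V S D p : ℝ → ℝ)
    (hV : ∀ t, HasDerivAt V (α * (1 - ω) * V t * p t * (1 - V t - S t - D t) - ε * V t) t)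
    (hS : ∀ t, HasDerivAt S (β * S t * p t * (1 - V t - S t - D t) - ε * S t) t)
    (hD : ∀ t, HasDerivAt D
      ((ω * α * V t + γ * D t) * p t * (1 - V t - S t - D t) - ε * D t) t)
    (hp : ∀ t, HasDerivAt p (κ * V t * (1 - p t) - εp * p t) t)
    (hVpos : ∀ t, 0 < V t)
    (hS0 : S 0 = c * V 0)
    (hD0 : D 0 = β * ω / ((β - γ) * (1 - ω)) * V 0) :
    ∀ t, S t = c * V t ∧ D t = β * ω / ((β - γ) * (1 - ω)) * V t := by
  have hVc : Continuous V := Differentiable.continuous (fun t => (hV t).differentiableAt)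
  have hSc : Continuous S := Differentiable.continuous (fun t => (hS t).differentiableAt)
  have hDc : Continuous D := Differentiable.continuous (fun t => (hD t).differentiableAt)
  have hpc : Continuous p := Differentiable.continuous (fun t => (hp t).differentiableAt)
  have hOc : Continuous (fun t => p t * (1 - V t - S t - D t)) := by fun_prop
  have hne1 : (1 : ℝ) - ω ≠ 0 := by linarith
  have hne2 : β - γ ≠ 0 := by linarith
  set m : ℝ := β * ω / ((β - γ) * (1 - ω)) with hm
  -- S - cV
  have hf : ∀ t, S t - c * V t = 0 := by
    apply lin_zero (fun t => β * (p t * (1 - V t - S t - D t)) - ε)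
    · fun_prop
    · intro t
      have := (hS t).sub ((hV t).const_mul c)
      refine this.congr_deriv (Eq.symm ?_)
      rw [← hαβ]; ring
    · rw [hS0]; ring
  have hg : ∀ t, D t - m * V t = 0 := by
    apply lin_zero (fun t => γ * (p t * (1 - V t - S t - D t)) - ε)
    · fun_prop
    · intro t
      have := (hD t).sub ((hV t).const_mul m)
      have key : m * (β - γ) = ω * α := by
        have h1 : m * (β - γ) = β * ω / (1 - ω) := by
          rw [hm]; field_simp
        rw [h1, ← hαβ]
        field_simp
      refine this.congr_deriv (Eq.symm ?_)
      linear_combination (V t * (p t * (1 - V t - S t - D t))) * key +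
        (m * V t * (p t * (1 - V t - S t - D t))) * hαβ
    · rw [hD0]; ring
  intro t
  constructor
  · have := hf t; linarith
  · have := hg t; linarith
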